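/- Suppose φ satisfies the stated assumption and fix q ∈ [1,∞). Given any x̃ ∈ ℝ^N, there exists δ > 0 (depending on x̃, A, b, β, q, φ and the vectors G_i) such that every local minimizer x̂ of F with ‖x̂ − x̃‖₂ < δ satisfies the support inclusion property: for every i ∈ J, if G_iᵀ x̃ = 0 then G_iᵀ x̂ = 0. (The paper proves this for all stationary points of F, a class which includes all local minimizers.) -/

import Mathlib

/-- The dot product `gᵀ x` of two vectors in `ℝ^N`. -/
noncomputable def dotp {N : ℕ} (g x : Fin N → ℝ) : ℝ := ∑ l, g l * x l

/-- The Euclidean norm `‖x‖₂` on `ℝ^N`. -/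
noncomputable def norm2 {N : ℕ} (x : Fin N → ℝ) : ℝ := Real.sqrt (∑ l, (x l) ^ 2)

section Aux

variable {N : ℕ}

lemma norm2_eq_norm (x : Fin N → ℝ) :
    norm2 x = ‖(WithLp.equiv 2 (Fin N → ℝ)).symm x‖ := by
  rw [EuclideanSpace.norm_eq]
  unfold norm2
  congr 1
  refine Finset.sum_congr rfl fun l _ => ?_
  rw [WithLp.equiv_symm_apply, PiLp.toLp_apply, Real.norm_eq_abs, sq_abs]

lemma norm2_nonneg (x : Fin N → ℝ) : 0 ≤ norm2 x := Real.sqrt_nonneg _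

lemma norm2_add_le (x y : Fin N → ℝ) : norm2 (x + y) ≤ norm2 x + norm2 y := by
  rw [norm2_eq_norm, norm2_eq_norm, norm2_eq_norm,
    show (WithLp.equiv 2 (Fin N → ℝ)).symm (x + y)
      = (WithLp.equiv 2 (Fin N → ℝ)).symm x + (WithLp.equiv 2 (Fin N → ℝ)).symm y from rfl]
  exact norm_add_le _ _

lemma norm2_smul (t : ℝ) (x : Fin N → ℝ) : norm2 (t • x) = |t| * norm2 x := by
  rw [norm2_eq_norm, norm2_eq_norm,
    show (WithLp.equiv 2 (Fin N → ℝ)).symm (t • x)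
      = t • (WithLp.equiv 2 (Fin N → ℝ)).symm x from rfl, norm_smul, Real.norm_eq_abs]

lemma norm2_sub_comm (x y : Fin N → ℝ) : norm2 (x - y) = norm2 (y - x) := by
  have : x - y = (-1 : ℝ) • (y - x) := by
    funext l; show x l - y l = (-1) * (y l - x l); ring
  rw [this, norm2_smul]; simp

lemma dotp_sub (g x y : Fin N → ℝ) : dotp g (x - y) = dotp g x - dotp g y := by
  unfold dotp
  rw [← Finset.sum_sub_distrib]
  exact Finset.sum_congr rfl fun l _ => by simp [mul_sub]

lemma dotp_segment (g x y : Fin N → ℝ) (t : ℝ) :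
    dotp g (x + t • (y - x)) = dotp g x + t * (dotp g y - dotp g x) := by
  unfold dotp
  have h : ∀ l, g l * (x + t • (y - x)) l = g l * x l + t * (g l * y l) - t * (g l * x l) := by
    intro l; simp [Pi.add_apply, Pi.smul_apply, Pi.sub_apply, smul_eq_mul]; ring
  simp only [h]
  rw [Finset.sum_sub_distrib, Finset.sum_add_distrib]
  have e1 : ∑ l, t * (g l * y l) = t * ∑ l, g l * y l := by rw [Finset.mul_sum]
  have e2 : ∑ l, t * (g l * x l) = t * ∑ l, g l * x l := by rw [Finset.mul_sum]
  rw [e1, e2]; ring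

lemma abs_dotp_le (g x : Fin N → ℝ) : |dotp g x| ≤ norm2 g * norm2 x := by
  have h := abs_real_inner_le_norm ((WithLp.equiv 2 (Fin N → ℝ)).symm g)
    ((WithLp.equiv 2 (Fin N → ℝ)).symm x)
  have e : dotp g x = (inner ℝ ((WithLp.equiv 2 (Fin N → ℝ)).symm g)
      ((WithLp.equiv 2 (Fin N → ℝ)).symm x) : ℝ) := by
    rw [PiLp.inner_apply]
    unfold dotp
    refine Finset.sum_congr rfl fun l _ => ?_
    simp [WithLp.equiv_symm_apply, RCLike.inner_apply, conj_trivial, mul_comm]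
  rw [norm2_eq_norm, norm2_eq_norm, e]
  exact h

noncomputable def dotpL (g : Fin N → ℝ) : (Fin N → ℝ) →ₗ[ℝ] ℝ where
  toFun x := dotp g x
  map_add' x y := by
    unfold dotp; rw [← Finset.sum_add_distrib]
    exact Finset.sum_congr rfl fun l _ => by simp [mul_add]
  map_smul' t x := by
    unfold dotp
    simp only [Pi.smul_apply, smul_eq_mul, RingHom.id_apply]
    rw [Finset.mul_sum]
    exact Finset.sum_congr rfl fun l _ => by ring

lemma dist_to_ker {ι : Type} [Fintype ι] (f : ι → ((Fin N → ℝ) →ₗ[ℝ] ℝ)) :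
    ∃ C > 0, ∀ x : Fin N → ℝ, ∀ c : ℝ, 0 ≤ c → (∀ i, |f i x| ≤ c) →
      ∃ y : Fin N → ℝ, (∀ i, f i y = 0) ∧ norm2 (x - y) ≤ C * c := by
  classical
  set E := EuclideanSpace ℝ (Fin N)
  let T : E →ₗ[ℝ] EuclideanSpace ℝ ι :=
    ((WithLp.linearEquiv 2 ℝ (ι → ℝ)).symm.toLinearMap.comp
      (LinearMap.pi f)).comp (WithLp.linearEquiv 2 ℝ (Fin N → ℝ)).toLinearMap
  have hTapp : ∀ (x : E) (i : ι), T x i = f i ((WithLp.equiv 2 (Fin N → ℝ)) x) := by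
    intro x i; rfl
  set K := LinearMap.ker T
  let g : (Kᗮ : Submodule ℝ E) →ₗ[ℝ] EuclideanSpace ℝ ι := T.comp Kᗮ.subtype
  have hker : LinearMap.ker g = ⊥ := by
    rw [Submodule.eq_bot_iff]
    rintro ⟨u, hu⟩ hmem
    have h1 : u ∈ K := by
      exact LinearMap.mem_ker.mpr (by simpa [g] using hmem)
    have h2 : u ∈ K ⊓ Kᗮ := ⟨h1, hu⟩
    rw [K.inf_orthogonal_eq_bot] at h2
    simpa using h2
  obtain ⟨Ka, hKa0, hKa⟩ := g.exists_antilipschitzWith hker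
  refine ⟨(Ka : ℝ) * Real.sqrt (Fintype.card ι) + 1, by positivity, ?_⟩
  intro x c hc hfc
  set xE : E := (WithLp.equiv 2 (Fin N → ℝ)).symm x with hxE
  set y : Fin N → ℝ := (WithLp.equiv 2 (Fin N → ℝ)) ((K.orthogonalProjectionOnto xE : E)) with hy
  have hyK : ((K.orthogonalProjectionOnto xE : E)) ∈ K := (K.orthogonalProjectionOnto xE).2
  refine ⟨y, ?_, ?_⟩
  · intro i
    have := LinearMap.mem_ker.mp hyK
    have h2 : T ((K.orthogonalProjectionOnto xE : E)) i = 0 := by rw [this]; rfl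
    rw [hTapp] at h2
    exact h2
  · set z : E := xE - (K.orthogonalProjectionOnto xE : E) with hz
    have hzO : z ∈ Kᗮ := Submodule.sub_starProjection_mem_orthogonal (K := K) xE
    have hnorm : norm2 (x - y) = ‖z‖ := by
      rw [norm2_eq_norm]; rfl
    have hTz : g ⟨z, hzO⟩ = T xE := by
      simp only [g, LinearMap.comp_apply, Submodule.subtype_apply, hz, map_sub]
      rw [LinearMap.mem_ker.mp hyK, sub_zero]
    have hanti : ‖(⟨z, hzO⟩ : Kᗮ)‖ ≤ (Ka : ℝ) * ‖g ⟨z, hzO⟩‖ := by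
      have := hKa.le_mul_dist (⟨z, hzO⟩ : Kᗮ) 0
      simpa [dist_eq_norm] using this
    have hTx : ‖T xE‖ ≤ Real.sqrt (Fintype.card ι) * c := by
      rw [EuclideanSpace.norm_eq]
      have hsum : (∑ i, ‖T xE i‖ ^ 2) ≤ (Fintype.card ι : ℝ) * c ^ 2 := by
        have : ∀ i : ι, ‖T xE i‖ ^ 2 ≤ c ^ 2 := by
          intro i
          rw [Real.norm_eq_abs]
          have hb : |T xE i| ≤ c := by rw [hTapp]; exact hfc i
          exact pow_le_pow_left₀ (abs_nonneg _) hb 2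
        calc (∑ i, ‖T xE i‖ ^ 2) ≤ ∑ _i : ι, c ^ 2 := Finset.sum_le_sum fun i _ => this i
          _ = (Fintype.card ι : ℝ) * c ^ 2 := by simp [mul_comm]
      calc Real.sqrt (∑ i, ‖T xE i‖ ^ 2) ≤ Real.sqrt ((Fintype.card ι : ℝ) * c ^ 2) :=
            Real.sqrt_le_sqrt hsum
        _ = Real.sqrt (Fintype.card ι) * c := by
            rw [Real.sqrt_mul (by positivity), Real.sqrt_sq hc]
    have hzn : ‖z‖ = ‖(⟨z, hzO⟩ : Kᗮ)‖ := rfl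
    rw [hnorm, hzn]
    calc ‖(⟨z, hzO⟩ : Kᗮ)‖ ≤ (Ka : ℝ) * ‖g ⟨z, hzO⟩‖ := hanti
      _ = (Ka : ℝ) * ‖T xE‖ := by rw [hTz]
      _ ≤ (Ka : ℝ) * (Real.sqrt (Fintype.card ι) * c) := by
          exact mul_le_mul_of_nonneg_left hTx (by positivity)
      _ ≤ ((Ka : ℝ) * Real.sqrt (Fintype.card ι) + 1) * c := by nlinarith [hc]

end Aux


/-- Assumptions on the potential function `φ` (with derivative `φ'` on `(0,∞)`):
continuous, concave and coercive on `[0,∞)` with `φ(0) = 0`; continuously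
differentiable on `(0,∞)` with positive derivative there, `φ'(0⁺) = +∞`, and
`φ'` Lipschitz on every `[α,∞)` with `α > 0`. -/
structure PhiAssumption (φ φ' : ℝ → ℝ) : Prop where
  nonneg : ∀ t : ℝ, 0 ≤ t → 0 ≤ φ t
  zero : φ 0 = 0
  cont : ContinuousOn φ (Set.Ici 0)
  concave : ConcaveOn ℝ (Set.Ici 0) φ
  coercive : Filter.Tendsto φ Filter.atTop Filter.atTop
  hasDeriv : ∀ t : ℝ, 0 < t → HasDerivAt φ (φ' t) t
  derivCont : ContinuousOn φ' (Set.Ioi 0)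
  derivPos : ∀ t : ℝ, 0 < t → 0 < φ' t
  derivAtZero : Filter.Tendsto φ' (nhdsWithin 0 (Set.Ioi 0)) Filter.atTop
  derivLip : ∀ α : ℝ, 0 < α → ∃ L : ℝ, ∀ s : ℝ, α ≤ s → ∀ t : ℝ, α ≤ t →
    |φ' s - φ' t| ≤ L * |s - t|

section Aux2

variable {φ φ' : ℝ → ℝ}

lemma phi_mono (hφ : PhiAssumption φ φ') : MonotoneOn φ (Set.Ici 0) := by
  refine monotoneOn_of_deriv_nonneg (convex_Ici 0) hφ.cont ?_ ?_
  · intro x hx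
    rw [interior_Ici] at hx
    exact (hφ.hasDeriv x hx).differentiableAt.differentiableWithinAt
  · intro x hx
    rw [interior_Ici] at hx
    rw [(hφ.hasDeriv x hx).deriv]
    exact (hφ.derivPos x hx).le

lemma phi_tangent (hφ : PhiAssumption φ φ') {c v : ℝ} (hc : 0 < c) (hv : 0 ≤ v)
    (hvc : v < c) : φ v ≤ φ c - (c - v) * φ' c := by
  have h := hφ.concave.le_slope_of_hasDerivAt (Set.mem_Ici.mpr hv)
    (Set.mem_Ici.mpr hc.le) hvc (hφ.hasDeriv c hc)
  rw [slope_def_field] at h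
  have hcv : 0 < c - v := by linarith
  rw [le_div_iff₀ hcv] at h
  linarith

lemma phi_lip (hφ : PhiAssumption φ φ') {a B : ℝ} (ha : 0 < a) :
    ∃ Lb : ℝ, 0 ≤ Lb ∧ ∀ u ∈ Set.Icc a B, ∀ v ∈ Set.Icc a B, |φ u - φ v| ≤ Lb * |u - v| := by
  obtain ⟨L, hL⟩ := hφ.derivLip a ha
  set Lb := φ' a + |L| * |B - a| with hLbdef
  have hLb0 : 0 ≤ Lb := by
    have h1 := hφ.derivPos a ha
    have h2 : (0:ℝ) ≤ |L| * |B - a| := by positivity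
    linarith
  refine ⟨Lb, hLb0, ?_⟩
  intro u hu v hv
  have hbound : ∀ x ∈ Set.Icc a B, ‖φ' x‖ ≤ Lb := by
    intro x hx
    have hx0 : 0 < x := lt_of_lt_of_le ha hx.1
    have h1 : |φ' x - φ' a| ≤ L * |x - a| := hL x hx.1 a le_rfl
    have h2 : L * |x - a| ≤ |L| * |B - a| := by
      have h3 : |x - a| ≤ |B - a| := by
        rw [abs_of_nonneg (by linarith [hx.1] : (0:ℝ) ≤ x - a),
          abs_of_nonneg (by linarith [hx.1, hx.2] : (0:ℝ) ≤ B - a)]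
        linarith [hx.2]
      calc L * |x - a| ≤ |L| * |x - a| :=
            mul_le_mul_of_nonneg_right (le_abs_self L) (abs_nonneg _)
        _ ≤ |L| * |B - a| := mul_le_mul_of_nonneg_left h3 (abs_nonneg _)
    rw [Real.norm_eq_abs, abs_of_pos (hφ.derivPos x hx0)]
    have h4 := le_abs_self (φ' x - φ' a)
    rw [hLbdef]
    linarith
  have key := Convex.norm_image_sub_le_of_norm_hasDerivWithin_le
    (fun x hx => (hφ.hasDeriv x (lt_of_lt_of_le ha hx.1)).hasDerivWithinAt)
    hbound (convex_Icc a B) hv hu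
  rw [Real.norm_eq_abs, Real.norm_eq_abs] at key
  exact key

lemma rpow_lip {q B : ℝ} (hq : 1 ≤ q) (hB : 0 ≤ B) (s t : ℝ) (hs : |s| ≤ B) (ht : |t| ≤ B) :
    |s| ^ q - |t| ^ q ≤ q * B ^ (q - 1) * |s - t| := by
  have hqB : (0:ℝ) ≤ q * B ^ (q - 1) :=
    mul_nonneg (by linarith) (Real.rpow_nonneg hB _)
  have hbound : ∀ x ∈ Set.Icc (0:ℝ) B, ‖q * x ^ (q - 1)‖ ≤ q * B ^ (q - 1) := by
    intro x hx
    have : (0:ℝ) ≤ q * x ^ (q - 1) := mul_nonneg (by linarith) (Real.rpow_nonneg hx.1 _)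
    rw [Real.norm_eq_abs, abs_of_nonneg this]
    exact mul_le_mul_of_nonneg_left
      (Real.rpow_le_rpow hx.1 hx.2 (by linarith)) (by linarith)
  have hderiv : ∀ x ∈ Set.Icc (0:ℝ) B,
      HasDerivWithinAt (fun y : ℝ => y ^ q) (q * x ^ (q - 1)) (Set.Icc 0 B) x :=
    fun x _ => (Real.hasDerivAt_rpow_const (Or.inr hq)).hasDerivWithinAt
  have key := Convex.norm_image_sub_le_of_norm_hasDerivWithin_le hderiv hbound (convex_Icc 0 B)
    (Set.mem_Icc.mpr ⟨abs_nonneg t, ht⟩) (Set.mem_Icc.mpr ⟨abs_nonneg s, hs⟩)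
  rw [Real.norm_eq_abs, Real.norm_eq_abs] at key
  calc |s| ^ q - |t| ^ q ≤ |(|s| ^ q - |t| ^ q)| := le_abs_self _
    _ ≤ q * B ^ (q - 1) * |(|s| - |t|)| := key
    _ ≤ q * B ^ (q - 1) * |s - t| :=
        mul_le_mul_of_nonneg_left (abs_abs_sub_abs_le_abs_sub s t) hqB

end Aux2


/-- The objective function
`F(x) = Σ_{i∈J} φ(|G_iᵀ x|) + (β/q) ‖Ax − b‖_q^q`. -/
noncomputable def objF {M N : ℕ} {ι : Type} [Fintype ι] (φ : ℝ → ℝ)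
    (A : Matrix (Fin M) (Fin N) ℝ) (b : Fin M → ℝ) (G : ι → Fin N → ℝ)
    (β q : ℝ) (x : Fin N → ℝ) : ℝ :=
  (∑ i : ι, φ |dotp (G i) x|) + (β / q) * ∑ l, |A.mulVec x l - b l| ^ q

/-- support inclusion property. Under the assumptions on `φ`,
for `q ∈ [1,∞)` and any given `x̃`, there is `δ > 0` such that every local
minimizer `x̂` of `F` with `‖x̂ − x̃‖₂ < δ` satisfies: for all `i ∈ J`,
`G_iᵀ x̃ = 0` implies `G_iᵀ x̂ = 0`. -/
theorem support_inclusion {M N : ℕ} (hM : 0 < M) (hN : 0 < N)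
    {ι : Type} [Fintype ι]
    (A : Matrix (Fin M) (Fin N) ℝ) (b : Fin M → ℝ) (G : ι → Fin N → ℝ)
    (β q : ℝ) (hβ : 0 < β) (hq : 1 ≤ q)
    (φ φ' : ℝ → ℝ) (hφ : PhiAssumption φ φ')
    (xt : Fin N → ℝ) :
    ∃ δ > (0 : ℝ), ∀ xh : Fin N → ℝ,
      (∃ ε > (0 : ℝ), ∀ x : Fin N → ℝ, norm2 (x - xh) < ε →
        objF φ A b G β q xh ≤ objF φ A b G β q x) →
      norm2 (xh - xt) < δ →
      ∀ i : ι, dotp (G i) xt = 0 → dotp (G i) xh = 0 := by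
  classical
  have hq0 : (0:ℝ) < q := lt_of_lt_of_le one_pos hq
  have hmulVec : ∀ (y : Fin N → ℝ) (l : Fin M), A.mulVec y l = dotp (fun k => A l k) y := by
    intro y l; simp [Matrix.mulVec, dotProduct, dotp]
  obtain ⟨α, hα0, hαmin⟩ : ∃ α : ℝ, 0 < α ∧ ∀ i : ι, dotp (G i) xt ≠ 0 → α ≤ |dotp (G i) xt| := by
    rcases (Finset.univ.filter (fun i : ι => dotp (G i) xt ≠ 0)).eq_empty_or_nonempty with h | h
    · refine ⟨1, one_pos, fun i hi => ?_⟩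
      exfalso
      have hmem : i ∈ Finset.univ.filter (fun i : ι => dotp (G i) xt ≠ 0) :=
        Finset.mem_filter.mpr ⟨Finset.mem_univ i, hi⟩
      rw [h] at hmem
      exact absurd hmem (Finset.notMem_empty i)
    · refine ⟨(Finset.univ.filter (fun i : ι => dotp (G i) xt ≠ 0)).inf' h
        (fun i => |dotp (G i) xt|), ?_, ?_⟩
      · obtain ⟨i, hi, heq⟩ := Finset.exists_mem_eq_inf' h (fun i => |dotp (G i) xt|)
        rw [heq]
        exact abs_pos.mpr (Finset.mem_filter.mp hi).2
      · intro i hi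
        exact Finset.inf'_le _ (Finset.mem_filter.mpr ⟨Finset.mem_univ i, hi⟩)
  set Ksum := ∑ i : ι, norm2 (G i) with hKsumdef
  clear_value Ksum
  have hKsum0 : 0 ≤ Ksum := by
    rw [hKsumdef]; exact Finset.sum_nonneg fun i _ => norm2_nonneg _
  set Kx := 1 + Ksum with hKxdef
  clear_value Kx
  have hKx1 : (1:ℝ) ≤ Kx := by rw [hKxdef]; linarith only [hKsum0]
  have hKx0 : (0:ℝ) < Kx := by linarith only [hKx1]
  have hGK : ∀ i : ι, norm2 (G i) ≤ Kx := by
    intro i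
    have h : norm2 (G i) ≤ Ksum := by
      rw [hKsumdef]
      exact Finset.single_le_sum (f := fun i : ι => norm2 (G i))
        (fun j _ => norm2_nonneg _) (Finset.mem_univ i)
    rw [hKxdef]; linarith only [h]
  set AB := ∑ l : Fin M, norm2 (fun k => A l k) with hABdef
  clear_value AB
  have hAB0 : 0 ≤ AB := by
    rw [hABdef]; exact Finset.sum_nonneg fun l _ => norm2_nonneg _
  have hrowAB : ∀ l, norm2 (fun k => A l k) ≤ AB := fun l => by
    rw [hABdef]
    exact Finset.single_le_sum (f := fun l => norm2 (fun k => A l k))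
      (fun j _ => norm2_nonneg _) (Finset.mem_univ l)
  set Sb := ∑ l : Fin M, |b l| with hSbdef
  clear_value Sb
  have hSb0 : 0 ≤ Sb := by
    rw [hSbdef]; exact Finset.sum_nonneg fun l _ => abs_nonneg _
  have hbl : ∀ l, |b l| ≤ Sb := fun l => by
    rw [hSbdef]
    exact Finset.single_le_sum (f := fun j => |b j|) (fun j _ => abs_nonneg _) (Finset.mem_univ l)
  have hxt0 : 0 ≤ norm2 xt := norm2_nonneg xt
  set B := 1 + α + Kx * (norm2 xt + 1) + AB * (norm2 xt + 1) + Sb with hBdef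
  clear_value B
  have ht1 : 0 ≤ Kx * (norm2 xt + 1) := mul_nonneg hKx0.le (by linarith only [hxt0])
  have ht2 : 0 ≤ AB * (norm2 xt + 1) := mul_nonneg hAB0 (by linarith only [hxt0])
  have hB0 : (0:ℝ) < B := by rw [hBdef]; linarith only [hα0, ht1, ht2, hSb0]
  set a := α / 2 with hadef
  clear_value a
  have ha0 : 0 < a := by rw [hadef]; linarith only [hα0]
  obtain ⟨Lφ, hLφ0, hφlip⟩ := phi_lip hφ (B := B) ha0
  set Cd := (β / q) * (q * B ^ (q - 1)) * AB with hCddef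
  clear_value Cd
  have hCd0 : 0 ≤ Cd := by
    rw [hCddef]
    exact mul_nonneg (mul_nonneg (div_nonneg hβ.le hq0.le)
      (mul_nonneg hq0.le (Real.rpow_nonneg hB0.le _))) hAB0
  obtain ⟨C₀, hC₀0, hC₀⟩ := dist_to_ker (N := N)
    (fun i : ι => if dotp (G i) xt = 0 then dotpL (G i) else 0)
  set C₂ := (Lφ * Ksum + Cd) * C₀ with hC₂def
  clear_value C₂
  have hC₂0 : 0 ≤ C₂ := by
    rw [hC₂def]
    exact mul_nonneg (by linarith only [mul_nonneg hLφ0 hKsum0, hCd0]) hC₀0.le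
  obtain ⟨η, hη0, hηp⟩ : ∃ η : ℝ, 0 < η ∧ ∀ u : ℝ, 0 < u → u < η → C₂ + 1 ≤ φ' u := by
    have h1 := hφ.derivAtZero.eventually (Filter.eventually_ge_atTop (C₂ + 1))
    rw [eventually_nhdsWithin_iff, Metric.eventually_nhds_iff] at h1
    obtain ⟨η, hη0, h2⟩ := h1
    refine ⟨η, hη0, fun u hu0 huη => h2 ?_ (Set.mem_Ioi.mpr hu0)⟩
    rw [Real.dist_eq, sub_zero, abs_of_pos hu0]; exact huη
  set D := 1 + C₀ * Kx with hDdef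
  clear_value D
  have hD1 : (1:ℝ) ≤ D := by rw [hDdef]; linarith only [(mul_pos hC₀0 hKx0).le]
  have hD0 : (0:ℝ) < D := by linarith only [hD1]
  set δ := min (min 1 (α / (2 * Kx)) / D) (η / (2 * Kx)) with hδdef
  clear_value δ
  have hδ0 : 0 < δ := by
    rw [hδdef]
    apply lt_min
    · exact div_pos (lt_min one_pos (div_pos hα0 (by linarith only [hKx0]))) hD0
    · exact div_pos hη0 (by linarith only [hKx0])
  refine ⟨δ, hδ0, ?_⟩
  intro xh hmin hclose i₀ hi₀0
  by_contra hne
  obtain ⟨ε, hε0, hlocal⟩ := hmin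
  set s := Finset.univ.filter (fun i : ι => dotp (G i) xt = 0) with hsdef
  set sc := Finset.univ.filter (fun i : ι => ¬ dotp (G i) xt = 0) with hscdef
  have hi₀s : i₀ ∈ s := Finset.mem_filter.mpr ⟨Finset.mem_univ _, hi₀0⟩
  obtain ⟨i₁, hi₁s, hi₁max⟩ := Finset.exists_max_image s (fun i => |dotp (G i) xh|) ⟨i₀, hi₀s⟩
  set c := |dotp (G i₁) xh| with hcdef
  clear_value c
  have hc0 : 0 < c := lt_of_lt_of_le (abs_pos.mpr hne) (hi₁max i₀ hi₀s)
  have hi₁t : dotp (G i₁) xt = 0 := (Finset.mem_filter.mp hi₁s).2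
  have hdiffbound : ∀ (g y z : Fin N → ℝ), |dotp g y - dotp g z| ≤ norm2 g * norm2 (y - z) := by
    intro g y z; rw [← dotp_sub]; exact abs_dotp_le g (y - z)
  have hcKδ : c ≤ Kx * δ := by
    have h1 : |dotp (G i₁) xh - dotp (G i₁) xt| ≤ norm2 (G i₁) * norm2 (xh - xt) :=
      hdiffbound _ _ _
    rw [hi₁t, sub_zero] at h1
    rw [hcdef]
    calc |dotp (G i₁) xh| ≤ norm2 (G i₁) * norm2 (xh - xt) := h1
      _ ≤ Kx * δ := mul_le_mul (hGK i₁) hclose.le (norm2_nonneg _) hKx0.le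
  have hδη : Kx * δ < η := by
    have h1 : δ ≤ η / (2 * Kx) := by rw [hδdef]; exact min_le_right _ _
    have h2 : δ * (2 * Kx) ≤ η := (le_div_iff₀ (by linarith only [hKx0])).mp h1
    linarith only [h2, mul_pos hKx0 hδ0]
  have hcη : c < η := lt_of_le_of_lt hcKδ hδη
  obtain ⟨x', hx'ker, hx'dist⟩ := hC₀ xh c hc0.le (fun i => by
    by_cases h : dotp (G i) xt = 0
    · rw [if_pos h]
      show |dotp (G i) xh| ≤ c
      exact hi₁max i (Finset.mem_filter.mpr ⟨Finset.mem_univ _, h⟩)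
    · rw [if_neg h]
      simpa using hc0.le)
  have hker' : ∀ i : ι, dotp (G i) xt = 0 → dotp (G i) x' = 0 := by
    intro i h
    have h2 := hx'ker i
    rw [if_pos h] at h2
    exact h2
  set nz := norm2 (xh - x') with hnzdef
  clear_value nz
  have hnz0 : 0 ≤ nz := by rw [hnzdef]; exact norm2_nonneg _
  have hnzC : nz ≤ C₀ * c := hx'dist
  set τ := min 1 (ε / (2 * (1 + nz))) with hτdef
  clear_value τ
  have hτ0 : 0 < τ := by
    rw [hτdef]; exact lt_min one_pos (div_pos hε0 (by linarith only [hnz0]))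
  have hτ1 : τ ≤ 1 := by rw [hτdef]; exact min_le_left _ _
  set xτ := xh + τ • (x' - xh) with hxτdef
  have hnz' : norm2 (x' - xh) = nz := by rw [hnzdef]; exact norm2_sub_comm _ _
  have hxτsub : xτ - xh = τ • (x' - xh) := by rw [hxτdef]; exact add_sub_cancel_left xh _
  have hxτnear : norm2 (xτ - xh) < ε := by
    rw [hxτsub, norm2_smul, abs_of_pos hτ0, hnz']
    have h1 : τ ≤ ε / (2 * (1 + nz)) := by rw [hτdef]; exact min_le_right _ _
    have h2 : τ * nz ≤ ε / (2 * (1 + nz)) * nz := mul_le_mul_of_nonneg_right h1 hnz0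
    have h3 : ε / (2 * (1 + nz)) * nz < ε := by
      rw [div_mul_eq_mul_div, div_lt_iff₀ (by linarith only [hnz0] : (0:ℝ) < 2 * (1 + nz))]
      exact mul_lt_mul_of_pos_left (by linarith only [hnz0]) hε0
    linarith only [h2, h3]
  have hFle := hlocal xτ hxτnear
  have hseg : ∀ g : Fin N → ℝ, dotp g xτ = dotp g xh + τ * (dotp g x' - dotp g xh) :=
    fun g => dotp_segment g xh x' τ
  have hsegdiff : ∀ g : Fin N → ℝ, |dotp g xτ - dotp g xh| ≤ norm2 g * (τ * nz) := by
    intro g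
    rw [hseg g]
    have he : dotp g xh + τ * (dotp g x' - dotp g xh) - dotp g xh
        = τ * (dotp g x' - dotp g xh) := by ring
    rw [he, abs_mul, abs_of_pos hτ0, ← dotp_sub]
    have h1 : |dotp g (x' - xh)| ≤ norm2 g * nz := by
      have h2 := abs_dotp_le g (x' - xh); rwa [hnz'] at h2
    calc τ * |dotp g (x' - xh)| ≤ τ * (norm2 g * nz) :=
          mul_le_mul_of_nonneg_left h1 hτ0.le
      _ = norm2 g * (τ * nz) := by ring
  have hδD : δ * D ≤ min 1 (α / (2 * Kx)) := by
    have h1 : δ ≤ min 1 (α / (2 * Kx)) / D := by rw [hδdef]; exact min_le_left _ _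
    calc δ * D ≤ min 1 (α / (2 * Kx)) / D * D := mul_le_mul_of_nonneg_right h1 hD0.le
      _ = min 1 (α / (2 * Kx)) := div_mul_cancel₀ _ hD0.ne'
  have hδD1 : δ * D ≤ 1 := le_trans hδD (min_le_left _ _)
  have hδDα : Kx * (δ * D) ≤ α / 2 := by
    have h1 : δ * D ≤ α / (2 * Kx) := le_trans hδD (min_le_right _ _)
    calc Kx * (δ * D) ≤ Kx * (α / (2 * Kx)) := mul_le_mul_of_nonneg_left h1 hKx0.le
      _ = α / 2 := by field_simp [hKx0.ne']
  have hxhρ : norm2 (xh - xt) ≤ δ * D :=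
    le_trans hclose.le
      (by linarith only [mul_nonneg hδ0.le (by linarith only [hD1] : (0:ℝ) ≤ D - 1)])
  have hxτρ : norm2 (xτ - xt) ≤ δ * D := by
    have h1 : xτ - xt = (xh - xt) + τ • (x' - xh) := by rw [hxτdef]; abel
    rw [h1]
    have h2 := norm2_add_le (xh - xt) (τ • (x' - xh))
    rw [norm2_smul, abs_of_pos hτ0, hnz'] at h2
    have h3 : τ * nz ≤ C₀ * c := by
      have h3' := mul_le_mul_of_nonneg_right hτ1 hnz0
      rw [one_mul] at h3'
      exact le_trans h3' hnzC
    have h4 : C₀ * c ≤ C₀ * (Kx * δ) := mul_le_mul_of_nonneg_left hcKδ hC₀0.le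
    calc norm2 ((xh - xt) + τ • (x' - xh)) ≤ norm2 (xh - xt) + τ * nz := h2
      _ ≤ δ + C₀ * (Kx * δ) := by linarith only [hclose, h3, h4]
      _ = δ * D := by rw [hDdef]; ring
  have hBdot : ∀ (y : Fin N → ℝ), norm2 (y - xt) ≤ δ * D → ∀ i : ι, |dotp (G i) y| ≤ B := by
    intro y hy i
    have h1 : |dotp (G i) y - dotp (G i) xt| ≤ norm2 (G i) * norm2 (y - xt) := hdiffbound _ _ _
    have h2 : |dotp (G i) xt| ≤ Kx * norm2 xt := by
      calc |dotp (G i) xt| ≤ norm2 (G i) * norm2 xt := abs_dotp_le _ _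
        _ ≤ Kx * norm2 xt := mul_le_mul_of_nonneg_right (hGK i) hxt0
    have h3 : norm2 (G i) * norm2 (y - xt) ≤ Kx * 1 :=
      mul_le_mul (hGK i) (le_trans hy hδD1) (norm2_nonneg _) hKx0.le
    have h4 := abs_sub_abs_le_abs_sub (dotp (G i) y) (dotp (G i) xt)
    rw [hBdef]
    linarith only [h1, h2, h3, h4, hSb0, hα0, ht2]
  have hadot : ∀ (y : Fin N → ℝ), norm2 (y - xt) ≤ δ * D → ∀ i : ι, dotp (G i) xt ≠ 0 →
      a ≤ |dotp (G i) y| := by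
    intro y hy i hi
    have h1 : |dotp (G i) y - dotp (G i) xt| ≤ norm2 (G i) * norm2 (y - xt) := hdiffbound _ _ _
    have h2 : norm2 (G i) * norm2 (y - xt) ≤ Kx * (δ * D) :=
      mul_le_mul (hGK i) hy (norm2_nonneg _) hKx0.le
    have h3 := hαmin i hi
    have h4 := abs_sub_abs_le_abs_sub (dotp (G i) xt) (dotp (G i) y)
    rw [abs_sub_comm] at h4
    rw [hadef]
    linarith only [h1, h2, h3, h4, hδDα]
  have hBr : ∀ (y : Fin N → ℝ), norm2 (y - xt) ≤ δ * D → ∀ l, |A.mulVec y l - b l| ≤ B := by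
    intro y hy l
    rw [hmulVec y l]
    have h1 : |dotp (fun k => A l k) y - dotp (fun k => A l k) xt|
        ≤ norm2 (fun k => A l k) * norm2 (y - xt) := hdiffbound _ _ _
    have h2 : |dotp (fun k => A l k) xt| ≤ AB * norm2 xt := by
      calc |dotp (fun k => A l k) xt| ≤ norm2 (fun k => A l k) * norm2 xt := abs_dotp_le _ _
        _ ≤ AB * norm2 xt := mul_le_mul_of_nonneg_right (hrowAB l) hxt0
    have h3 : norm2 (fun k => A l k) * norm2 (y - xt) ≤ AB * 1 :=
      mul_le_mul (hrowAB l) (le_trans hy hδD1) (norm2_nonneg _) hAB0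
    have h4 := hbl l
    have h5 : |dotp (fun k => A l k) y - b l|
        ≤ |dotp (fun k => A l k) y - dotp (fun k => A l k) xt|
          + |dotp (fun k => A l k) xt| + |b l| := by
      have he : dotp (fun k => A l k) y - b l
          = (dotp (fun k => A l k) y - dotp (fun k => A l k) xt)
            + (dotp (fun k => A l k) xt - b l) := by ring
      rw [he]
      refine le_trans (abs_add_le _ _) ?_
      have h6 : |dotp (fun k => A l k) xt - b l| ≤ |dotp (fun k => A l k) xt| + |b l| := by
        rw [sub_eq_add_neg]
        refine le_trans (abs_add_le _ _) ?_
        rw [abs_neg]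
      linarith only [h6]
    rw [hBdef]
    linarith only [h1, h2, h3, h4, h5, hα0, ht1]
  have hAτ : ∀ i ∈ s, dotp (G i) xτ = (1 - τ) * dotp (G i) xh := by
    intro i hi
    have h0 := hker' i (Finset.mem_filter.mp hi).2
    rw [hseg (G i), h0]; ring
  have hbndA : (∑ i ∈ s, (φ |dotp (G i) xτ| - φ |dotp (G i) xh|)) ≤ -(τ * c * φ' c) := by
    have hterm : ∀ i ∈ s, φ |dotp (G i) xτ| - φ |dotp (G i) xh| ≤ 0 := by
      intro i hi
      rw [hAτ i hi, abs_mul, abs_of_nonneg (by linarith only [hτ1] : (0:ℝ) ≤ 1 - τ)]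
      have hmem1 : (1 - τ) * |dotp (G i) xh| ∈ Set.Ici (0:ℝ) :=
        Set.mem_Ici.mpr (mul_nonneg (by linarith only [hτ1]) (abs_nonneg _))
      have hmem2 : |dotp (G i) xh| ∈ Set.Ici (0:ℝ) := Set.mem_Ici.mpr (abs_nonneg _)
      have hle : (1 - τ) * |dotp (G i) xh| ≤ |dotp (G i) xh| := by
        linarith only [mul_nonneg hτ0.le (abs_nonneg (dotp (G i) xh))]
      linarith only [phi_mono hφ hmem1 hmem2 hle]
    have hsplit : (∑ i ∈ s, (φ |dotp (G i) xτ| - φ |dotp (G i) xh|))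
        = (φ |dotp (G i₁) xτ| - φ |dotp (G i₁) xh|)
          + ∑ i ∈ s.erase i₁, (φ |dotp (G i) xτ| - φ |dotp (G i) xh|) :=
      (Finset.add_sum_erase s _ hi₁s).symm
    have hrest : (∑ i ∈ s.erase i₁, (φ |dotp (G i) xτ| - φ |dotp (G i) xh|)) ≤ 0 :=
      Finset.sum_nonpos fun i hi => hterm i (Finset.mem_of_mem_erase hi)
    have htang : φ |dotp (G i₁) xτ| - φ |dotp (G i₁) xh| ≤ -(τ * c * φ' c) := by
      rw [hAτ i₁ hi₁s, abs_mul, abs_of_nonneg (by linarith only [hτ1] : (0:ℝ) ≤ 1 - τ), ← hcdef]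
      have h := phi_tangent hφ hc0 (v := (1 - τ) * c)
        (mul_nonneg (by linarith only [hτ1]) hc0.le) (by linarith only [mul_pos hτ0 hc0])
      have he : c - (1 - τ) * c = τ * c := by ring
      rw [he] at h
      linarith only [h]
    linarith only [hsplit, hrest, htang]
  have hbndB : (∑ i ∈ sc, (φ |dotp (G i) xτ| - φ |dotp (G i) xh|)) ≤ Lφ * Ksum * (τ * nz) := by
    have hterm : ∀ i ∈ sc, φ |dotp (G i) xτ| - φ |dotp (G i) xh|
        ≤ Lφ * norm2 (G i) * (τ * nz) := by
      intro i hi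
      have hi' : dotp (G i) xt ≠ 0 := (Finset.mem_filter.mp hi).2
      have hm1 : |dotp (G i) xτ| ∈ Set.Icc a B := ⟨hadot xτ hxτρ i hi', hBdot xτ hxτρ i⟩
      have hm2 : |dotp (G i) xh| ∈ Set.Icc a B := ⟨hadot xh hxhρ i hi', hBdot xh hxhρ i⟩
      have h1 := hφlip _ hm1 _ hm2
      have h2 : |(|dotp (G i) xτ|) - (|dotp (G i) xh|)| ≤ |dotp (G i) xτ - dotp (G i) xh| :=
        abs_abs_sub_abs_le_abs_sub _ _
      have h3 := hsegdiff (G i)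
      have h4 := le_abs_self (φ |dotp (G i) xτ| - φ |dotp (G i) xh|)
      calc φ |dotp (G i) xτ| - φ |dotp (G i) xh|
          ≤ |(φ |dotp (G i) xτ| - φ |dotp (G i) xh|)| := h4
        _ ≤ Lφ * |(|dotp (G i) xτ|) - (|dotp (G i) xh|)| := h1
        _ ≤ Lφ * (norm2 (G i) * (τ * nz)) :=
            mul_le_mul_of_nonneg_left (le_trans h2 h3) hLφ0
        _ = Lφ * norm2 (G i) * (τ * nz) := by ring
    have h5 := Finset.sum_le_sum hterm
    have h6 : (∑ i ∈ sc, Lφ * norm2 (G i) * (τ * nz)) ≤ Lφ * Ksum * (τ * nz) := by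
      have he : (∑ i ∈ sc, Lφ * norm2 (G i) * (τ * nz))
          = (∑ i ∈ sc, norm2 (G i)) * (Lφ * (τ * nz)) := by
        rw [Finset.sum_mul]
        exact Finset.sum_congr rfl fun i _ => by ring
      rw [he]
      have h7 : (∑ i ∈ sc, norm2 (G i)) ≤ Ksum := by
        rw [hKsumdef]
        exact Finset.sum_le_sum_of_subset_of_nonneg (Finset.subset_univ sc)
          (fun i _ _ => norm2_nonneg _)
      have h8 : 0 ≤ Lφ * (τ * nz) := mul_nonneg hLφ0 (mul_nonneg hτ0.le hnz0)
      calc (∑ i ∈ sc, norm2 (G i)) * (Lφ * (τ * nz)) ≤ Ksum * (Lφ * (τ * nz)) :=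
            mul_le_mul_of_nonneg_right h7 h8
        _ = Lφ * Ksum * (τ * nz) := by ring
    linarith only [h5, h6]
  have hqB' : (0:ℝ) ≤ q * B ^ (q - 1) := mul_nonneg hq0.le (Real.rpow_nonneg hB0.le _)
  have hbndC : (β / q) * (∑ l, (|A.mulVec xτ l - b l| ^ q - |A.mulVec xh l - b l| ^ q))
      ≤ Cd * (τ * nz) := by
    have hterm : ∀ l : Fin M, |A.mulVec xτ l - b l| ^ q - |A.mulVec xh l - b l| ^ q
        ≤ (q * B ^ (q - 1)) * (norm2 (fun k => A l k) * (τ * nz)) := by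
      intro l
      have h1 := rpow_lip hq hB0.le (A.mulVec xτ l - b l) (A.mulVec xh l - b l)
        (hBr xτ hxτρ l) (hBr xh hxhρ l)
      have h2 : A.mulVec xτ l - b l - (A.mulVec xh l - b l)
          = dotp (fun k => A l k) xτ - dotp (fun k => A l k) xh := by
        rw [hmulVec xτ l, hmulVec xh l]; ring
      rw [h2] at h1
      have h3 := hsegdiff (fun k => A l k)
      calc |A.mulVec xτ l - b l| ^ q - |A.mulVec xh l - b l| ^ q
          ≤ q * B ^ (q - 1) * |dotp (fun k => A l k) xτ - dotp (fun k => A l k) xh| := h1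
        _ ≤ (q * B ^ (q - 1)) * (norm2 (fun k => A l k) * (τ * nz)) :=
            mul_le_mul_of_nonneg_left h3 hqB'
    have h4 := Finset.sum_le_sum (fun l (_ : l ∈ Finset.univ) => hterm l)
    have h5 : (∑ l : Fin M, (q * B ^ (q - 1)) * (norm2 (fun k => A l k) * (τ * nz)))
        = (q * B ^ (q - 1)) * AB * (τ * nz) := by
      have he : (∑ l : Fin M, norm2 (fun k => A l k) * (τ * nz)) = AB * (τ * nz) := by
        rw [hABdef, Finset.sum_mul]
      rw [← Finset.mul_sum, he]; ring
    have hβq : (0:ℝ) ≤ β / q := div_nonneg hβ.le hq0.le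
    calc (β / q) * (∑ l, (|A.mulVec xτ l - b l| ^ q - |A.mulVec xh l - b l| ^ q))
        ≤ (β / q) * ((q * B ^ (q - 1)) * AB * (τ * nz)) :=
          mul_le_mul_of_nonneg_left (le_trans h4 (le_of_eq h5)) hβq
      _ = Cd * (τ * nz) := by rw [hCddef]; ring
  have e1 : objF φ A b G β q xτ - objF φ A b G β q xh
      = (∑ i ∈ s, (φ |dotp (G i) xτ| - φ |dotp (G i) xh|))
        + (∑ i ∈ sc, (φ |dotp (G i) xτ| - φ |dotp (G i) xh|))
        + (β / q) * (∑ l, (|A.mulVec xτ l - b l| ^ q - |A.mulVec xh l - b l| ^ q)) := by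
    have h1 : ∀ y : Fin N → ℝ, (∑ i : ι, φ |dotp (G i) y|)
        = (∑ i ∈ s, φ |dotp (G i) y|) + ∑ i ∈ sc, φ |dotp (G i) y| := fun y =>
      (Finset.sum_filter_add_sum_filter_not Finset.univ _ _).symm
    simp only [objF]
    rw [h1 xτ, h1 xh, Finset.sum_sub_distrib, Finset.sum_sub_distrib,
      Finset.sum_sub_distrib, mul_sub]
    ring
  have hφ'c := hηp c hc0 hcη
  have hkey : objF φ A b G β q xτ - objF φ A b G β q xh ≤ -(τ * c) := by
    rw [e1]
    have h9 : Lφ * Ksum * (τ * nz) + Cd * (τ * nz) ≤ C₂ * (τ * c) := by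
      have h10 : 0 ≤ Lφ * Ksum + Cd := by linarith only [mul_nonneg hLφ0 hKsum0, hCd0]
      have h11 : τ * nz ≤ τ * (C₀ * c) := mul_le_mul_of_nonneg_left hnzC hτ0.le
      calc Lφ * Ksum * (τ * nz) + Cd * (τ * nz) = (Lφ * Ksum + Cd) * (τ * nz) := by ring
        _ ≤ (Lφ * Ksum + Cd) * (τ * (C₀ * c)) := mul_le_mul_of_nonneg_left h11 h10
        _ = C₂ * (τ * c) := by rw [hC₂def]; ring
    have h12 : τ * c * (C₂ + 1) ≤ τ * c * φ' c :=
      mul_le_mul_of_nonneg_left hφ'c (mul_nonneg hτ0.le hc0.le)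
    linarith only [hbndA, hbndB, hbndC, h9, h12]
  linarith only [hFle, hkey, mul_pos hτ0 hc0]
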